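/- The function u(x,t) = 2·(∂²/∂x²) log τ(x,t), with τ(x,t) = 1 + exp(√c₁·(x − δ₁ − c₁t)) + exp(√c₂·(x − δ₂ − c₂t)) + ((√c₁ − √c₂)/(√c₁ + √c₂))²·exp(√c₁·(x − δ₁ − c₁t) + √c₂·(x − δ₂ − c₂t)), is a solution of the Korteweg–de Vries equation ∂u/∂t = −∂³u/∂x³ − 6u·∂u/∂x for all (x,t) ∈ ℝ². -/

import Mathlib

set_option maxHeartbeats 1600000
set_option maxRecDepth 8000

open Real

/-- Basic exponential building block of the 2-soliton tau function. -/
noncomputable def Ee (k b x t : ℝ) : ℝ := Real.exp (k * x - k ^ 3 * t + b)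

/-- The `j`-th x-derivative of the tau function. -/
noncomputable def Tj (k1 k2 a b1 b2 : ℝ) (j : ℕ) (x t : ℝ) : ℝ :=
  (if j = 0 then (1 : ℝ) else 0) + k1 ^ j * Ee k1 b1 x t + k2 ^ j * Ee k2 b2 x t +
    a * (k1 + k2) ^ j * (Ee k1 b1 x t * Ee k2 b2 x t)

/-- The t-derivative of `Tj`. -/
noncomputable def Sj (k1 k2 a b1 b2 : ℝ) (j : ℕ) (x t : ℝ) : ℝ :=
  0 + k1 ^ j * (-k1 ^ 3 * Ee k1 b1 x t) + k2 ^ j * (-k2 ^ 3 * Ee k2 b2 x t) +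
    a * (k1 + k2) ^ j *
      (-k1 ^ 3 * Ee k1 b1 x t * Ee k2 b2 x t + Ee k1 b1 x t * (-k2 ^ 3 * Ee k2 b2 x t))

noncomputable def N2f (T : ℕ → ℝ → ℝ → ℝ) (x t : ℝ) : ℝ :=
  T 2 x t * T 0 x t - T 1 x t * T 1 x t

noncomputable def N3f (T : ℕ → ℝ → ℝ → ℝ) (x t : ℝ) : ℝ :=
  2 * T 1 x t ^ 3 - 3 * (T 0 x t * (T 1 x t * T 2 x t)) + T 0 x t ^ 2 * T 3 x t

noncomputable def N4f (T : ℕ → ℝ → ℝ → ℝ) (x t : ℝ) : ℝ :=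
  T 0 x t ^ 3 * T 4 x t + 12 * (T 0 x t * (T 1 x t ^ 2 * T 2 x t)) - 6 * T 1 x t ^ 4 -
    3 * (T 0 x t ^ 2 * (T 2 x t * T 2 x t)) - 4 * (T 0 x t ^ 2 * (T 1 x t * T 3 x t))

noncomputable def N5f (T : ℕ → ℝ → ℝ → ℝ) (x t : ℝ) : ℝ :=
  24 * T 1 x t ^ 5 - 60 * (T 0 x t * (T 1 x t ^ 3 * T 2 x t)) +
    30 * (T 0 x t ^ 2 * (T 1 x t * (T 2 x t * T 2 x t))) +
    20 * (T 0 x t ^ 2 * (T 1 x t ^ 2 * T 3 x t)) - 10 * (T 0 x t ^ 3 * (T 2 x t * T 3 x t)) -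
    5 * (T 0 x t ^ 3 * (T 1 x t * T 4 x t)) + T 0 x t ^ 4 * T 5 x t

noncomputable def Mf (T S : ℕ → ℝ → ℝ → ℝ) (x t : ℝ) : ℝ :=
  (S 2 x t * T 0 x t + T 2 x t * S 0 x t - 2 * (T 1 x t * S 1 x t)) * T 0 x t -
    2 * (N2f T x t * S 0 x t)

lemma hasDerivAt_Ee_x (k b t x : ℝ) : HasDerivAt (fun y => Ee k b y t) (k * Ee k b x t) x := by
  have h : HasDerivAt (fun y : ℝ => k * y - k ^ 3 * t + b) (k * 1) x :=
    (((hasDerivAt_id x).const_mul k).sub_const (k ^ 3 * t)).add_const b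
  have h2 := h.exp
  simp only [Ee, mul_one] at *
  simpa [mul_comm] using h2

lemma hasDerivAt_Ee_t (k b x t : ℝ) : HasDerivAt (fun s => Ee k b x s) (-k ^ 3 * Ee k b x t) t := by
  have h : HasDerivAt (fun s : ℝ => k * x - k ^ 3 * s + b) (-(k ^ 3 * 1)) t :=
    (((hasDerivAt_id t).const_mul (k ^ 3)).const_sub (k * x)).add_const b
  have h2 := h.exp
  simp only [Ee, mul_one] at *
  rw [show -k ^ 3 * Real.exp (k * x - k ^ 3 * t + b) =
    Real.exp (k * x - k ^ 3 * t + b) * -k ^ 3 by ring]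
  simpa using h2

lemma Tj_pos (k1 k2 a b1 b2 : ℝ) (ha0 : 0 ≤ a) (x t : ℝ) :
    0 < Tj k1 k2 a b1 b2 0 x t := by
  have h1 := Real.exp_pos (k1 * x - k1 ^ 3 * t + b1)
  have h2 := Real.exp_pos (k2 * x - k2 ^ 3 * t + b2)
  have h3 : 0 ≤ a * (Real.exp (k1 * x - k1 ^ 3 * t + b1) * Real.exp (k2 * x - k2 ^ 3 * t + b2)) :=
    mul_nonneg ha0 (by positivity)
  simp only [Tj, Ee, pow_zero, one_mul, reduceIte]
  linarith

lemma hasDerivAt_Tj_x (k1 k2 a b1 b2 : ℝ) (j : ℕ) (x t : ℝ) :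
    HasDerivAt (fun y => Tj k1 k2 a b1 b2 j y t) (Tj k1 k2 a b1 b2 (j + 1) x t) x := by
  have h1 := hasDerivAt_Ee_x k1 b1 t x
  have h2 := hasDerivAt_Ee_x k2 b2 t x
  have key : Tj k1 k2 a b1 b2 (j + 1) x t =
      0 + k1 ^ j * (k1 * Ee k1 b1 x t) + k2 ^ j * (k2 * Ee k2 b2 x t) +
        a * (k1 + k2) ^ j *
          (k1 * Ee k1 b1 x t * Ee k2 b2 x t + Ee k1 b1 x t * (k2 * Ee k2 b2 x t)) := by
    simp only [Tj, Nat.succ_ne_zero, if_false]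
    ring
  rw [key]
  simp only [Tj]
  exact (((hasDerivAt_const x _).add (h1.const_mul _)).add (h2.const_mul _)).add
    ((h1.mul h2).const_mul _)

lemma hasDerivAt_Tj_t (k1 k2 a b1 b2 : ℝ) (j : ℕ) (x t : ℝ) :
    HasDerivAt (fun s => Tj k1 k2 a b1 b2 j x s) (Sj k1 k2 a b1 b2 j x t) t := by
  have h1 := hasDerivAt_Ee_t k1 b1 x t
  have h2 := hasDerivAt_Ee_t k2 b2 x t
  simp only [Tj, Sj]
  exact (((hasDerivAt_const t _).add (h1.const_mul _)).add (h2.const_mul _)).add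
    ((h1.mul h2).const_mul _)

lemma Tj_eq0 (k1 k2 a b1 b2 x t : ℝ) :
    Tj k1 k2 a b1 b2 0 x t = (1:ℝ) + k1 ^ 0 * Ee k1 b1 x t + k2 ^ 0 * Ee k2 b2 x t + a * (k1 + k2) ^ 0 * (Ee k1 b1 x t * Ee k2 b2 x t) := by
  simp only [Tj, reduceIte]

lemma Tj_eq1 (k1 k2 a b1 b2 x t : ℝ) :
    Tj k1 k2 a b1 b2 1 x t = (0:ℝ) + k1 ^ 1 * Ee k1 b1 x t + k2 ^ 1 * Ee k2 b2 x t + a * (k1 + k2) ^ 1 * (Ee k1 b1 x t * Ee k2 b2 x t) := by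
  simp only [Tj]; norm_num

lemma Tj_eq2 (k1 k2 a b1 b2 x t : ℝ) :
    Tj k1 k2 a b1 b2 2 x t = (0:ℝ) + k1 ^ 2 * Ee k1 b1 x t + k2 ^ 2 * Ee k2 b2 x t + a * (k1 + k2) ^ 2 * (Ee k1 b1 x t * Ee k2 b2 x t) := by
  simp only [Tj]; norm_num

lemma Tj_eq3 (k1 k2 a b1 b2 x t : ℝ) :
    Tj k1 k2 a b1 b2 3 x t = (0:ℝ) + k1 ^ 3 * Ee k1 b1 x t + k2 ^ 3 * Ee k2 b2 x t + a * (k1 + k2) ^ 3 * (Ee k1 b1 x t * Ee k2 b2 x t) := by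
  simp only [Tj]; norm_num

lemma Tj_eq4 (k1 k2 a b1 b2 x t : ℝ) :
    Tj k1 k2 a b1 b2 4 x t = (0:ℝ) + k1 ^ 4 * Ee k1 b1 x t + k2 ^ 4 * Ee k2 b2 x t + a * (k1 + k2) ^ 4 * (Ee k1 b1 x t * Ee k2 b2 x t) := by
  simp only [Tj]; norm_num

lemma Tj_eq5 (k1 k2 a b1 b2 x t : ℝ) :
    Tj k1 k2 a b1 b2 5 x t = (0:ℝ) + k1 ^ 5 * Ee k1 b1 x t + k2 ^ 5 * Ee k2 b2 x t + a * (k1 + k2) ^ 5 * (Ee k1 b1 x t * Ee k2 b2 x t) := by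
  simp only [Tj]; norm_num

lemma Sj_eq0 (k1 k2 a b1 b2 x t : ℝ) :
    Sj k1 k2 a b1 b2 0 x t = 0 + k1 ^ 0 * (-k1 ^ 3 * Ee k1 b1 x t) + k2 ^ 0 * (-k2 ^ 3 * Ee k2 b2 x t) + a * (k1 + k2) ^ 0 * (-k1 ^ 3 * Ee k1 b1 x t * Ee k2 b2 x t + Ee k1 b1 x t * (-k2 ^ 3 * Ee k2 b2 x t)) := by
  simp only [Sj]

lemma Sj_eq1 (k1 k2 a b1 b2 x t : ℝ) :
    Sj k1 k2 a b1 b2 1 x t = 0 + k1 ^ 1 * (-k1 ^ 3 * Ee k1 b1 x t) + k2 ^ 1 * (-k2 ^ 3 * Ee k2 b2 x t) + a * (k1 + k2) ^ 1 * (-k1 ^ 3 * Ee k1 b1 x t * Ee k2 b2 x t + Ee k1 b1 x t * (-k2 ^ 3 * Ee k2 b2 x t)) := by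
  simp only [Sj]

lemma Sj_eq2 (k1 k2 a b1 b2 x t : ℝ) :
    Sj k1 k2 a b1 b2 2 x t = 0 + k1 ^ 2 * (-k1 ^ 3 * Ee k1 b1 x t) + k2 ^ 2 * (-k2 ^ 3 * Ee k2 b2 x t) + a * (k1 + k2) ^ 2 * (-k1 ^ 3 * Ee k1 b1 x t * Ee k2 b2 x t + Ee k1 b1 x t * (-k2 ^ 3 * Ee k2 b2 x t)) := by
  simp only [Sj]

lemma key_poly (k1 k2 a b1 b2 x t : ℝ) (haa : a * (k1 + k2) ^ 2 = (k1 - k2) ^ 2) :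
    Mf (Tj k1 k2 a b1 b2) (Sj k1 k2 a b1 b2) x t * Tj k1 k2 a b1 b2 0 x t ^ 2 =
      -(N5f (Tj k1 k2 a b1 b2) x t) -
        12 * (N2f (Tj k1 k2 a b1 b2) x t * N3f (Tj k1 k2 a b1 b2) x t) := by
  simp only [Mf, N2f, N3f, N5f]
  simp only [Sj_eq0, Sj_eq1, Sj_eq2]
  simp only [Tj_eq0]
  simp only [Tj_eq1]
  simp only [Tj_eq2]
  simp only [Tj_eq3]
  simp only [Tj_eq4]
  simp only [Tj_eq5]
  linear_combination
      ((-3:ℝ)*a^3*k1^2*k2*(Ee k1 b1 x t)^4*(Ee k2 b2 x t)^4 + (-3:ℝ)*a^3*k1*k2^2*(Ee k1 b1 x t)^4*(Ee k2 b2 x t)^4 + (-9:ℝ)*a^2*k1^2*k2*(Ee k1 b1 x t)^4*(Ee k2 b2 x t)^3 + (-3:ℝ)*a^2*k1^2*k2*(Ee k1 b1 x t)^3*(Ee k2 b2 x t)^4 + (-3:ℝ)*a^2*k1^2*k2*(Ee k1 b1 x t)^3*(Ee k2 b2 x t)^3 + (-3:ℝ)*a^2*k1*k2^2*(Ee k1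 b1 x t)^4*(Ee k2 b2 x t)^3 + (-9:ℝ)*a^2*k1*k2^2*(Ee k1 b1 x t)^3*(Ee k2 b2 x t)^4 + (-3:ℝ)*a^2*k1*k2^2*(Ee k1 b1 x t)^3*(Ee k2 b2 x t)^3 + (-9:ℝ)*a*k1^2*k2*(Ee k1 b1 x t)^4*(Ee k2 b2 x t)^2 + (-6:ℝ)*a*k1^2*k2*(Ee k1 b1 x t)^3*(Ee k2 b2 x t)^3 + (-6:ℝ)*a*k1^2*k2*(Ee k1 b1 x t)^3*(Ee k2 b2 x t)^2 + (3:ℝ)*a*k1^2*k2*(Ee k1 b1 x t)^2*(Ee k2 b2 x t)^4 + (6:ℝ)*a*k1^2*k2*(Ee k1 b1 x t)^2*(Ee k2 b2 x t)^3 + (3:ℝ)*a*k1^2*k2*(Ee k1 b1 x t)^2*(Ee k2 b2 x t)^2 + (3:ℝ)*a*k1*k2^2*(Ee k1 b1 x t)^4*(Ee k2 b2 x t)^2 + (-6:ℝ)*a*k1*k2^2*(Ee k1 b1 x t)^3*(Ee k2 b2 x t)^3 + (6:ℝ)*a*k1*k2^2*(Ee k1 b1 x t)^3*(Ee k2 b2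 x t)^2 + (-9:ℝ)*a*k1*k2^2*(Ee k1 b1 x t)^2*(Ee k2 b2 x t)^4 + (-6:ℝ)*a*k1*k2^2*(Ee k1 b1 x t)^2*(Ee k2 b2 x t)^3 + (3:ℝ)*a*k1*k2^2*(Ee k1 b1 x t)^2*(Ee k2 b2 x t)^2 + (-3:ℝ)*k1^2*k2*(Ee k1 b1 x t)^4*(Ee k2 b2 x t) + (-3:ℝ)*k1^2*k2*(Ee k1 b1 x t)^3*(Ee k2 b2 x t)^2 + (-3:ℝ)*k1^2*k2*(Ee k1 b1 x t)^3*(Ee k2 b2 x t) + (3:ℝ)*k1^2*k2*(Ee k1 b1 x t)^2*(Ee k2 b2 x t)^3 + (6:ℝ)*k1^2*k2*(Ee k1 b1 x t)^2*(Ee k2 b2 x t)^2 + (3:ℝ)*k1^2*k2*(Ee k1 b1 x t)^2*(Ee k2 b2 x t) + (3:ℝ)*k1^2*k2*(Ee k1 b1 x t)*(Ee k2 b2 x t)^4 + (9:ℝ)*k1^2*k2*(Ee k1 b1 x t)*(Ee k2 b2 x t)^3 + (9:ℝ)*k1^2*k2*(Ee k1 b1 x t)*(Ee k2 b2 x t)^2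 + (3:ℝ)*k1^2*k2*(Ee k1 b1 x t)*(Ee k2 b2 x t) + (3:ℝ)*k1*k2^2*(Ee k1 b1 x t)^4*(Ee k2 b2 x t) + (3:ℝ)*k1*k2^2*(Ee k1 b1 x t)^3*(Ee k2 b2 x t)^2 + (9:ℝ)*k1*k2^2*(Ee k1 b1 x t)^3*(Ee k2 b2 x t) + (-3:ℝ)*k1*k2^2*(Ee k1 b1 x t)^2*(Ee k2 b2 x t)^3 + (6:ℝ)*k1*k2^2*(Ee k1 b1 x t)^2*(Ee k2 b2 x t)^2 + (9:ℝ)*k1*k2^2*(Ee k1 b1 x t)^2*(Ee k2 b2 x t) + (-3:ℝ)*k1*k2^2*(Ee k1 b1 x t)*(Ee k2 b2 x t)^4 + (-3:ℝ)*k1*k2^2*(Ee k1 b1 x t)*(Ee k2 b2 x t)^3 + (3:ℝ)*k1*k2^2*(Ee k1 b1 x t)*(Ee k2 b2 x t)^2 + (3:ℝ)*k1*k2^2*(Ee k1 b1 x t)*(Ee k2 b2 x t)) * haa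

theorem aux_KdV (k1 k2 a b1 b2 : ℝ) (ha0 : 0 ≤ a)
    (haa : a * (k1 + k2) ^ 2 = (k1 - k2) ^ 2)
    (u : ℝ → ℝ → ℝ)
    (hu : u = fun x t : ℝ =>
      2 * iteratedDeriv 2 (fun y : ℝ => Real.log (Tj k1 k2 a b1 b2 0 y t)) x) :
    ∀ x t : ℝ,
      deriv (fun s : ℝ => u x s) t =
        -(iteratedDeriv 3 (fun y : ℝ => u y t) x)
          - 6 * u x t * deriv (fun y : ℝ => u y t) x := by
  intro x t
  set T : ℕ → ℝ → ℝ → ℝ := Tj k1 k2 a b1 b2 with hTdef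
  set S : ℕ → ℝ → ℝ → ℝ := Sj k1 k2 a b1 b2 with hSdef
  have hpos : ∀ z s : ℝ, 0 < T 0 z s := by
    intro z s; rw [hTdef]; exact Tj_pos k1 k2 a b1 b2 ha0 z s
  have hTx : ∀ (j : ℕ) (z s : ℝ), HasDerivAt (fun y => T j y s) (T (j + 1) z s) z := by
    intro j z s; rw [hTdef]; exact hasDerivAt_Tj_x k1 k2 a b1 b2 j z s
  have hTt : ∀ (j : ℕ) (z s : ℝ), HasDerivAt (fun r => T j z r) (S j z s) s := by
    intro j z s; rw [hTdef, hSdef]; exact hasDerivAt_Tj_t k1 k2 a b1 b2 j z s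
  -- closed form of u
  have hu2 : ∀ z s : ℝ, u z s = 2 * N2f T z s / T 0 z s ^ 2 := by
    intro z s
    rw [hu]
    simp only []
    have hd1 : deriv (fun y => Real.log (T 0 y s)) = fun y => T 1 y s / T 0 y s := by
      funext w
      exact ((hTx 0 w s).log (hpos w s).ne').deriv
    have hd2 : HasDerivAt (fun y => T 1 y s / T 0 y s) (N2f T z s / T 0 z s ^ 2) z :=
      ((hTx 1 z s).div (hTx 0 z s) (hpos z s).ne').congr_deriv (by simp only [N2f])
    rw [show (2 : ℕ) = 1 + 1 from rfl, iteratedDeriv_succ, iteratedDeriv_one, hd1, hd2.deriv,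
      mul_div_assoc]
  have hg2 : ∀ z : ℝ, HasDerivAt (fun y => 2 * N2f T y t / T 0 y t ^ 2)
      (2 * N3f T z t / T 0 z t ^ 3) z := by
    intro z
    have h0 := (hpos z t).ne'
    simp only [N2f, N3f]
    have hnum := (((hTx 2 z t).mul (hTx 0 z t)).sub ((hTx 1 z t).mul (hTx 1 z t))).const_mul (2:ℝ)
    have hden := (hTx 0 z t).pow 2
    exact (hnum.div hden (pow_ne_zero 2 h0)).congr_deriv (by push_cast; simp only [Pi.pow_apply, Pi.mul_apply, Pi.sub_apply]; field_simp; ring)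
  have hg3 : ∀ z : ℝ, HasDerivAt (fun y => 2 * N3f T y t / T 0 y t ^ 3)
      (2 * N4f T z t / T 0 z t ^ 4) z := by
    intro z
    have h0 := (hpos z t).ne'
    simp only [N3f, N4f]
    have hnum := (((((hTx 1 z t).pow 3).const_mul (2:ℝ)).sub
        (((hTx 0 z t).mul ((hTx 1 z t).mul (hTx 2 z t))).const_mul (3:ℝ))).add
        (((hTx 0 z t).pow 2).mul (hTx 3 z t))).const_mul (2:ℝ)
    have hden := (hTx 0 z t).pow 3
    exact (hnum.div hden (pow_ne_zero 3 h0)).congr_deriv (by push_cast; simp only [Pi.pow_apply, Pi.mul_apply, Pi.sub_apply, Pi.add_apply]; field_simp; ring)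
  have hg4 : ∀ z : ℝ, HasDerivAt (fun y => 2 * N4f T y t / T 0 y t ^ 4)
      (2 * N5f T z t / T 0 z t ^ 5) z := by
    intro z
    have h0 := (hpos z t).ne'
    simp only [N4f, N5f]
    have hnum := (((((((hTx 0 z t).pow 3).mul (hTx 4 z t)).add
        (((hTx 0 z t).mul (((hTx 1 z t).pow 2).mul (hTx 2 z t))).const_mul (12:ℝ))).sub
        (((hTx 1 z t).pow 4).const_mul (6:ℝ))).sub
        ((((hTx 0 z t).pow 2).mul ((hTx 2 z t).mul (hTx 2 z t))).const_mul (3:ℝ))).sub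
        ((((hTx 0 z t).pow 2).mul ((hTx 1 z t).mul (hTx 3 z t))).const_mul (4:ℝ))).const_mul (2:ℝ)
    have hden := (hTx 0 z t).pow 4
    exact (hnum.div hden (pow_ne_zero 4 h0)).congr_deriv (by push_cast; simp only [Pi.pow_apply, Pi.mul_apply, Pi.sub_apply, Pi.add_apply]; field_simp; ring)
  have hgt : HasDerivAt (fun s => 2 * N2f T x s / T 0 x s ^ 2)
      (2 * Mf T S x t / T 0 x t ^ 3) t := by
    have h0 := (hpos x t).ne'
    simp only [N2f, Mf]
    have hnum := (((hTt 2 x t).mul (hTt 0 x t)).sub ((hTt 1 x t).mul (hTt 1 x t))).const_mul (2:ℝ)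
    have hden := (hTt 0 x t).pow 2
    exact (hnum.div hden (pow_ne_zero 2 h0)).congr_deriv
      (by push_cast; simp only [Pi.pow_apply, Pi.mul_apply, Pi.sub_apply]; field_simp; ring)
  have h1fun : (fun y => u y t) = fun y => 2 * N2f T y t / T 0 y t ^ 2 :=
    funext fun y => hu2 y t
  have e_ux : deriv (fun y : ℝ => u y t) x = 2 * N3f T x t / T 0 x t ^ 3 := by
    rw [h1fun]; exact (hg2 x).deriv
  have e_u3 : iteratedDeriv 3 (fun y : ℝ => u y t) x = 2 * N5f T x t / T 0 x t ^ 5 := by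
    rw [h1fun]
    rw [show (3 : ℕ) = 1 + 1 + 1 from rfl, iteratedDeriv_succ, iteratedDeriv_succ,
      iteratedDeriv_one]
    have h2 : deriv (fun y => 2 * N2f T y t / T 0 y t ^ 2) =
        fun y => 2 * N3f T y t / T 0 y t ^ 3 := funext fun z => (hg2 z).deriv
    rw [h2]
    have h3 : deriv (fun y => 2 * N3f T y t / T 0 y t ^ 3) =
        fun y => 2 * N4f T y t / T 0 y t ^ 4 := funext fun z => (hg3 z).deriv
    rw [h3]
    exact (hg4 x).deriv
  have e_ut : deriv (fun s : ℝ => u x s) t = 2 * Mf T S x t / T 0 x t ^ 3 := by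
    have h1 : (fun s : ℝ => u x s) = fun s => 2 * N2f T x s / T 0 x s ^ 2 :=
      funext fun s => hu2 x s
    rw [h1]; exact hgt.deriv
  rw [e_ut, e_u3, e_ux, hu2 x t]
  have hpoly := key_poly k1 k2 a b1 b2 x t haa
  rw [← hTdef, ← hSdef] at hpoly
  have h0 := (hpos x t).ne'
  field_simp
  linear_combination hpoly

/-- The 2-soliton `u(x,t) = 2 (∂²/∂x²) log τ(x,t)` with phases `θₙ(t) = δₙ + cₙ t`
solves the KdV equation `∂u/∂t = −∂³u/∂x³ − 6 u ∂u/∂x` on all of `ℝ²`. -/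
theorem two_soliton_solves_KdV (c₁ c₂ δ₁ δ₂ : ℝ) (hc₁ : 0 < c₁) (hc₂ : 0 < c₂)
    (hne : c₁ ≠ c₂) (τ : ℝ → ℝ → ℝ) (u : ℝ → ℝ → ℝ)
    (hτ : τ = fun x t : ℝ =>
      1 + Real.exp (Real.sqrt c₁ * (x - δ₁ - c₁ * t))
        + Real.exp (Real.sqrt c₂ * (x - δ₂ - c₂ * t))
        + ((Real.sqrt c₁ - Real.sqrt c₂) / (Real.sqrt c₁ + Real.sqrt c₂)) ^ 2
          * Real.exp (Real.sqrt c₁ * (x - δ₁ - c₁ * t) + Real.sqrt c₂ * (x - δ₂ - c₂ * t)))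
    (hu : u = fun x t : ℝ => 2 * iteratedDeriv 2 (fun y : ℝ => Real.log (τ y t)) x) :
    ∀ x t : ℝ,
      deriv (fun s : ℝ => u x s) t =
        -(iteratedDeriv 3 (fun y : ℝ => u y t) x)
          - 6 * u x t * deriv (fun y : ℝ => u y t) x := by
  set k1 := Real.sqrt c₁ with hk1def
  set k2 := Real.sqrt c₂ with hk2def
  have hc1' : k1 ^ 2 = c₁ := Real.sq_sqrt hc₁.le
  have hc2' : k2 ^ 2 = c₂ := Real.sq_sqrt hc₂.le
  have hk1 : 0 < k1 := Real.sqrt_pos.2 hc₁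
  have hk2 : 0 < k2 := Real.sqrt_pos.2 hc₂
  have hτ' : τ = fun x t : ℝ =>
      Tj k1 k2 (((k1 - k2) / (k1 + k2)) ^ 2) (-(k1 * δ₁)) (-(k2 * δ₂)) 0 x t := by
    rw [hτ]; funext X s
    have e1 : k1 * (X - δ₁ - c₁ * s) = k1 * X - k1 ^ 3 * s + -(k1 * δ₁) := by
      linear_combination (k1 * s) * hc1'
    have e2 : k2 * (X - δ₂ - c₂ * s) = k2 * X - k2 ^ 3 * s + -(k2 * δ₂) := by
      linear_combination (k2 * s) * hc2'
    simp only [Tj, Ee, pow_zero, one_mul, reduceIte]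
    rw [e1, e2]
    simp only [Real.exp_add]
    ring
  have ha0 : 0 ≤ ((k1 - k2) / (k1 + k2)) ^ 2 := sq_nonneg _
  have haa : ((k1 - k2) / (k1 + k2)) ^ 2 * (k1 + k2) ^ 2 = (k1 - k2) ^ 2 := by
    rw [div_pow, div_mul_cancel₀]
    exact pow_ne_zero 2 (by positivity)
  exact aux_KdV k1 k2 (((k1 - k2) / (k1 + k2)) ^ 2) (-(k1 * δ₁)) (-(k2 * δ₂)) ha0 haa u
    (by rw [hu]; simp only [hτ'])
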